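/- Given real numbers λ₁, ..., λₙ with Σλᵢ ≥ 2πn, there exist real numbers λ'₁, ..., λ'ₙ with λ'ᵢ ≡ λᵢ (mod 2π) for each i, Σλ'ᵢ = Σλᵢ, all λ'ᵢ > 0, and max_{i,j} |λ'ᵢ − λ'ⱼ| ≤ 2πn. -/

import Mathlib

/-- Given reals `λ₁, ..., λₙ` with `Σλᵢ ≥ 2πn`, there are reals
`λ'₁, ..., λ'ₙ` with `λ'ᵢ ≡ λᵢ (mod 2π)`, the same sum, all positive, and any two
within distance `2πn` of each other. -/
theorem eigenvalue_redistribution {n : ℕ} (hn : 1 ≤ n) (lam : Fin n → ℝ)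
    (hsum : 2 * Real.pi * n ≤ ∑ i, lam i) :
    ∃ lam' : Fin n → ℝ,
      (∀ i, ∃ k : ℤ, lam' i - lam i = 2 * Real.pi * k) ∧
      (∑ i, lam' i) = (∑ i, lam i) ∧
      (∀ i, 0 < lam' i) ∧
      (∀ i j, |lam' i - lam' j| ≤ 2 * Real.pi * n) := by
  set c : ℝ := 2 * Real.pi with hc_def
  have hc : 0 < c := by positivity
  -- reduction of each lam i into (0, c]
  set m : Fin n → ℤ := fun i => ⌈lam i / c⌉ - 1 with hm_def
  set μ : Fin n → ℝ := fun i => lam i - c * m i with hμ_def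
  have hμpos : ∀ i, 0 < μ i := by
    intro i
    have h1 : (⌈lam i / c⌉ : ℝ) - 1 < lam i / c := by
      have := Int.ceil_lt_add_one (lam i / c)
      linarith
    have h2 : c * ((⌈lam i / c⌉ : ℝ) - 1) < c * (lam i / c) := by
      exact (mul_lt_mul_iff_right₀ hc).mpr h1
    rw [mul_div_cancel₀ _ (ne_of_gt hc)] at h2
    simp only [hμ_def, hm_def]
    push_cast
    linarith
  have hμle : ∀ i, μ i ≤ c := by
    intro i
    have h1 : lam i / c ≤ (⌈lam i / c⌉ : ℝ) := Int.le_ceil _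
    have h2 : c * (lam i / c) ≤ c * (⌈lam i / c⌉ : ℝ) :=
      (mul_le_mul_iff_right₀ hc).mpr h1
    rw [mul_div_cancel₀ _ (ne_of_gt hc)] at h2
    simp only [hμ_def, hm_def]
    push_cast
    linarith
  set K : ℤ := ∑ i, m i with hK_def
  have hcast : (K : ℝ) = ∑ i, (m i : ℝ) := by
    rw [hK_def]; push_cast; ring
  have hsum_split : ∑ i, lam i = (∑ i, μ i) + c * K := by
    rw [hcast]
    simp only [hμ_def, Finset.sum_sub_distrib, Finset.mul_sum]
    ring
  have hμsum : ∑ i, μ i ≤ c * n := by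
    calc ∑ i, μ i ≤ ∑ _i : Fin n, c := Finset.sum_le_sum fun i _ => hμle i
    _ = c * n := by simp [mul_comm]
  have hK0 : 0 ≤ K := by
    by_contra h
    push_neg at h
    have hK1 : K ≤ -1 := by omega
    have : (K : ℝ) ≤ -1 := by exact_mod_cast hK1
    have : c * (K : ℝ) ≤ c * (-1) := (mul_le_mul_iff_right₀ hc).mpr this
    have hn' : (1 : ℝ) ≤ n := by exact_mod_cast hn
    nlinarith [hsum_split, hμsum, hsum]
  have hnz : (n : ℤ) ≠ 0 := by exact_mod_cast Nat.one_le_iff_ne_zero.mp hn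
  set q : ℤ := K / n with hq_def
  set r : ℤ := K % n with hr_def
  have hr0 : 0 ≤ r := Int.emod_nonneg K hnz
  have hrn : r < n := Int.emod_lt_of_pos K (by exact_mod_cast hn)
  have hq0 : 0 ≤ q := Int.ediv_nonneg hK0 (by exact_mod_cast Nat.zero_le n)
  have hKqr : K = n * q + r := by
    rw [hq_def, hr_def]; exact (Int.mul_ediv_add_emod K n).symm
  set qf : Fin n → ℤ := fun i => if (i : ℤ) < r then q + 1 else q with hqf_def
  have hqf0 : ∀ i, 0 ≤ qf i := by
    intro i; simp only [hqf_def]; split <;> omega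
  have hqfsum : ∑ i, qf i = K := by
    have h1 : ∑ i, qf i = ∑ i : Fin n, (q + if (i : ℤ) < r then (1 : ℤ) else 0) := by
      apply Finset.sum_congr rfl
      intro i _; simp only [hqf_def]; split <;> simp
    have h2 : ∑ i : Fin n, (if (i : ℤ) < r then (1 : ℤ) else 0)
        = ∑ i ∈ Finset.range n, (if (i : ℤ) < r then (1 : ℤ) else 0) := by
      rw [Finset.sum_range fun i => if (i : ℤ) < r then (1 : ℤ) else 0]
    have h3 : ∀ i : ℕ, ((i : ℤ) < r) ↔ (i < r.toNat) := by
      intro i; omega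
    have h2' : ∑ i ∈ Finset.range n, (if (i : ℤ) < r then (1 : ℤ) else 0)
        = ∑ i ∈ Finset.range n, (if i < r.toNat then (1 : ℤ) else 0) :=
      Finset.sum_congr rfl fun i _ => if_congr (h3 i) rfl rfl
    have h5 : Finset.filter (fun i => i < r.toNat) (Finset.range n)
        = Finset.range r.toNat := by
      ext x
      simp only [Finset.mem_filter, Finset.mem_range]
      constructor
      · rintro ⟨_, h⟩; exact h
      · intro h; exact ⟨lt_of_lt_of_le h (by omega), h⟩
    have h4 : ∑ i ∈ Finset.range n, (if i < r.toNat then (1 : ℤ) else 0)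
        = (r.toNat : ℤ) := by
      rw [Finset.sum_boole, h5, Finset.card_range]
    rw [h1, Finset.sum_add_distrib, h2, h2', h4, Finset.sum_const, Finset.card_univ,
      Fintype.card_fin, nsmul_eq_mul]
    omega
  refine ⟨fun i => μ i + c * qf i, ?_, ?_, ?_, ?_⟩
  · intro i
    refine ⟨qf i - m i, ?_⟩
    simp only [hμ_def]
    push_cast
    ring
  · rw [Finset.sum_add_distrib, ← Finset.mul_sum]
    have : ∑ i, (qf i : ℝ) = (K : ℝ) := by exact_mod_cast congrArg (Int.cast : ℤ → ℝ) hqfsum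
    rw [this, hsum_split]
  · intro i
    show 0 < μ i + c * (qf i : ℝ)
    have h1 : 0 ≤ c * (qf i : ℝ) := by
      apply mul_nonneg hc.le
      exact_mod_cast hqf0 i
    linarith [hμpos i]
  · intro i j
    show |(μ i + c * qf i) - (μ j + c * qf j)| ≤ c * n
    rcases eq_or_ne i j with heq | hij
    · rw [heq, sub_self, abs_zero]
      positivity
    · have hn2 : 2 ≤ n := by
        have h1 : (i : ℕ) ≠ (j : ℕ) := fun h => hij (Fin.ext h)
        have h2 := i.isLt
        have h3 := j.isLt
        omega
      have hqfd : |(qf i : ℝ) - (qf j : ℝ)| ≤ 1 := by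
        have : |qf i - qf j| ≤ 1 := by
          simp only [hqf_def]; split <;> split <;> simp
        calc |(qf i : ℝ) - (qf j : ℝ)| = |((qf i - qf j : ℤ) : ℝ)| := by push_cast; ring_nf
        _ = ((|qf i - qf j| : ℤ) : ℝ) := by rw [Int.cast_abs]
        _ ≤ 1 := by exact_mod_cast this
      have hμd : |μ i - μ j| ≤ c := by
        rw [abs_sub_le_iff]
        constructor <;> linarith [hμpos i, hμpos j, hμle i, hμle j]
      have : |(μ i + c * qf i) - (μ j + c * qf j)| ≤ |μ i - μ j| + c * |(qf i : ℝ) - (qf j : ℝ)| := by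
        calc |(μ i + c * qf i) - (μ j + c * qf j)|
            = |(μ i - μ j) + c * ((qf i : ℝ) - qf j)| := by ring_nf
        _ ≤ |μ i - μ j| + |c * ((qf i : ℝ) - qf j)| := abs_add_le _ _
        _ = |μ i - μ j| + c * |(qf i : ℝ) - (qf j : ℝ)| := by
            rw [abs_mul, abs_of_pos hc]
      have hcn : c * 2 ≤ c * n := by
        apply mul_le_mul_of_nonneg_left _ hc.le
        exact_mod_cast hn2
      have h2 : c * |(qf i : ℝ) - (qf j : ℝ)| ≤ c * 1 := by
        exact mul_le_mul_of_nonneg_left hqfd hc.le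
      calc |(μ i + c * qf i) - (μ j + c * qf j)|
          ≤ |μ i - μ j| + c * |(qf i : ℝ) - (qf j : ℝ)| := this
      _ ≤ c + c * 1 := by linarith
      _ = c * 2 := by ring
      _ ≤ c * n := hcn
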